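/- Let G be an unmixed bipartite graph on {x_1,...,x_n} ∪ {y_1,...,y_n} without isolated vertices (satisfying conditions (a) and (b)), and let L_G be its associated lattice of minimal vertex covers. Let F be a nonempty proper subset of [n], with complement F̄, and let L_{G_{F̄}} be the lattice associated to the induced subgraph G_{F̄}. For α ∈ L_{G_{F̄}}, let δ_α be the union of all γ ⊆ {p_i : i ∈ F} with α ∪ γ ∈ L_G. Let S be the set of all β ∈ L_G such that no set of the form β ∪ {p_i : i ∈ A} with ∅ ≠ A ⊆ F is an upper neighbour (cover) of β in L_G. Then the map φ : L_{G_{F̄}} → S given by φ(α) = α ∪ δ_α is an order isomorphism. -/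

import Mathlib

/-- `C` is a vertex cover of the subgraph of the bipartite graph with
edge relation `E` (edges `{x i, y j}` for `E i j`) induced on the vertices
`{x i, y i : i ∈ F}`. -/
def IsCoverOn (n : ℕ) (E : Fin n → Fin n → Prop) (F : Set (Fin n))
    (C : Set (Fin n ⊕ Fin n)) : Prop :=
  (∀ v ∈ C, Sum.elim (· ∈ F) (· ∈ F) v) ∧
  (∀ i ∈ F, ∀ j ∈ F, E i j → Sum.inl i ∈ C ∨ Sum.inr j ∈ C)

/-- `C` is a minimal vertex cover of the induced subgraph on `F`. -/
def IsMinCoverOn (n : ℕ) (E : Fin n → Fin n → Prop) (F : Set (Fin n))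
    (C : Set (Fin n ⊕ Fin n)) : Prop :=
  IsCoverOn n E F C ∧ ∀ D ⊂ C, ¬ IsCoverOn n E F D

/-- The vertex set `{x k : k ∈ α} ∪ {y k : k ∈ F \ α}` attached to `α ⊆ F`. -/
def coverSetOn (n : ℕ) (F α : Set (Fin n)) : Set (Fin n ⊕ Fin n) :=
  (Sum.inl '' α) ∪ (Sum.inr '' (F \ α))

/-- The lattice `L_{G_F}` of the induced subgraph `G_F`: those `α ⊆ F` whose
associated vertex set is a minimal vertex cover of `G_F`. -/
def LGF (n : ℕ) (E : Fin n → Fin n → Prop) (F : Set (Fin n)) : Set (Set (Fin n)) :=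
  {α | α ⊆ F ∧ IsMinCoverOn n E F (coverSetOn n F α)}

/-- `β'` is an upper neighbour (cover) of `β` in the poset `L`. -/
def IsUpperNeighbour (n : ℕ) (L : Set (Set (Fin n))) (β β' : Set (Fin n)) : Prop :=
  β' ∈ L ∧ β ⊂ β' ∧ ∀ γ ∈ L, ¬ (β ⊂ γ ∧ γ ⊂ β')

/-- With loops `E i i`, membership in `LGF` reduces to a closure condition:
minimality of the cover is automatic since removing any vertex breaks the
loop edge at that index. -/
lemma mem_LGF_iff (n : ℕ) (E : Fin n → Fin n → Prop) (ha : ∀ i, E i i)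
    (F α : Set (Fin n)) :
    α ∈ LGF n E F ↔ α ⊆ F ∧ ∀ i ∈ F, ∀ j ∈ F, E i j → j ∈ α → i ∈ α := by
  constructor
  · rintro ⟨hαF, ⟨_, hcov⟩, _⟩
    refine ⟨hαF, fun i hi j hj hij hjα => ?_⟩
    rcases hcov i hi j hj hij with h | h
    · simpa [coverSetOn] using h
    · simp only [coverSetOn, Set.mem_union, Set.mem_image] at h
      rcases h with ⟨k, hk, hk2⟩ | ⟨k, hk, hk2⟩
      · exact absurd hk2 (by simp)
      · cases Sum.inr.inj hk2; exact absurd hjα hk.2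
  · rintro ⟨hαF, hcl⟩
    refine ⟨hαF, ⟨⟨?_, ?_⟩, ?_⟩⟩
    · rintro v hv
      rcases hv with ⟨k, hk, rfl⟩ | ⟨k, hk, rfl⟩
      · exact hαF hk
      · exact hk.1
    · intro i hi j hj hij
      by_cases hjα : j ∈ α
      · exact Or.inl (Or.inl ⟨i, hcl i hi j hj hij hjα, rfl⟩)
      · exact Or.inr (Or.inr ⟨j, ⟨hj, hjα⟩, rfl⟩)
    · intro D hD hDcov
      obtain ⟨v, hvC, hvD⟩ := Set.exists_of_ssubset hD
      rcases hvC with ⟨k, hk, rfl⟩ | ⟨k, hk, rfl⟩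
      · rcases hDcov.2 k (hαF hk) k (hαF hk) (ha k) with h | h
        · exact hvD h
        · have := hD.subset h
          rcases this with ⟨m, hm, hm2⟩ | ⟨m, hm, hm2⟩
          · exact absurd hm2 (by simp)
          · cases Sum.inr.inj hm2; exact hm.2 hk
      · rcases hDcov.2 k hk.1 k hk.1 (ha k) with h | h
        · have := hD.subset h
          rcases this with ⟨m, hm, hm2⟩ | ⟨m, hm, hm2⟩
          · cases Sum.inl.inj hm2; exact hk.2 hm
          · exact absurd hm2 (by simp)
        · exact hvD h

/-- The content of Lemma 3.3, stated without `let`-bindings. -/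
lemma aux_main (n : ℕ) (E : Fin n → Fin n → Prop)
    (ha : ∀ i, E i i)
    (hb : ∀ i j k : Fin n, i ≠ j → j ≠ k → i ≠ k → E i j → E j k → E i k)
    (F : Set (Fin n)) :
    Set.BijOn (fun α => α ∪ ⋃₀ {γ | γ ⊆ F ∧ α ∪ γ ∈ LGF n E Set.univ}) (LGF n E Fᶜ)
      {β ∈ LGF n E Set.univ |
        ∀ A ⊆ F, A.Nonempty → ¬ IsUpperNeighbour n (LGF n E Set.univ) β (β ∪ A)} ∧
    ∀ α ∈ LGF n E Fᶜ, ∀ α' ∈ LGF n E Fᶜ,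
      (α ⊆ α' ↔ (α ∪ ⋃₀ {γ | γ ⊆ F ∧ α ∪ γ ∈ LGF n E Set.univ}) ⊆
        (α' ∪ ⋃₀ {γ | γ ⊆ F ∧ α' ∪ γ ∈ LGF n E Set.univ})) := by
  classical
  set LG := LGF n E Set.univ with hLGdef
  set LGc := LGF n E Fᶜ with hLGcdef
  set δ : Set (Fin n) → Set (Fin n) := fun α => ⋃₀ {γ | γ ⊆ F ∧ α ∪ γ ∈ LG} with hδdef
  set φ : Set (Fin n) → Set (Fin n) := fun α => α ∪ δ α with hφdef
  set S : Set (Set (Fin n)) :=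
    {β ∈ LG | ∀ A ⊆ F, A.Nonempty → ¬ IsUpperNeighbour n LG β (β ∪ A)} with hSdef
  have htr : ∀ i j k : Fin n, E i j → E j k → E i k := by
    intro i j k hij hjk
    rcases eq_or_ne i j with rfl | h1
    · exact hjk
    rcases eq_or_ne j k with rfl | h2
    · exact hij
    rcases eq_or_ne i k with rfl | h3
    · exact ha i
    exact hb i j k h1 h2 h3 hij hjk
  have hLG : ∀ β, β ∈ LG ↔ ∀ i j : Fin n, E i j → j ∈ β → i ∈ β := by
    intro β
    rw [hLGdef, mem_LGF_iff n E ha]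
    simp
  have hLGc : ∀ α, α ∈ LGc ↔ α ⊆ Fᶜ ∧ ∀ i ∈ Fᶜ, ∀ j ∈ Fᶜ, E i j → j ∈ α → i ∈ α := by
    intro α
    rw [hLGcdef, mem_LGF_iff n E ha]
  have hδF : ∀ α, δ α ⊆ F := by
    intro α x hx
    obtain ⟨γ, ⟨hγF, _⟩, hxγ⟩ := hx
    exact hγF hxγ
  have hmemδ : ∀ α γ, γ ⊆ F → α ∪ γ ∈ LG → γ ⊆ δ α := by
    intro α γ h1 h2
    exact Set.subset_sUnion_of_mem ⟨h1, h2⟩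
  have hδLG : ∀ α ∈ LGc, α ∪ δ α ∈ LG := by
    intro α hα
    obtain ⟨hαc, hαcl⟩ := (hLGc α).1 hα
    set γ₀ : Set (Fin n) := {i | i ∈ F ∧ ∃ j ∈ α, E i j} with hγ₀def
    have hγ₀LG : α ∪ γ₀ ∈ LG := by
      rw [hLG]
      intro i j hij hj
      rcases hj with hj | ⟨hjF, k, hkα, hjk⟩
      · by_cases hiF : i ∈ F
        · exact Or.inr ⟨hiF, j, hj, hij⟩
        · exact Or.inl (hαcl i hiF j (hαc hj) hij hj)
      · have hik : E i k := htr i j k hij hjk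
        by_cases hiF : i ∈ F
        · exact Or.inr ⟨hiF, k, hkα, hik⟩
        · exact Or.inl (hαcl i hiF k (hαc hkα) hik hkα)
    have hγ₀F : γ₀ ⊆ F := fun x hx => hx.1
    rw [hLG]
    intro i j hij hj
    rcases hj with hj | hj
    · rcases (hLG _).1 hγ₀LG i j hij (Or.inl hj) with h | h
      · exact Or.inl h
      · exact Or.inr (hmemδ α γ₀ hγ₀F hγ₀LG h)
    · obtain ⟨γ, ⟨hγF, hγLG⟩, hjγ⟩ := hj
      rcases (hLG _).1 hγLG i j hij (Or.inr hjγ) with h | h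
      · exact Or.inl h
      · exact Or.inr (hmemδ α γ hγF hγLG h)
  have hδmono : ∀ α ∈ LGc, ∀ α' ∈ LGc, α ⊆ α' → δ α ⊆ δ α' := by
    intro α hα α' hα' hs
    have h1 := hδLG α hα
    have h2 := hδLG α' hα'
    have h3 : α' ∪ (δ α ∪ δ α') ∈ LG := by
      rw [hLG]
      intro i j hij hj
      rcases hj with hj | hj | hj
      · rcases (hLG _).1 h2 i j hij (Or.inl hj) with h | h
        · exact Or.inl h
        · exact Or.inr (Or.inr h)
      · rcases (hLG _).1 h1 i j hij (Or.inr hj) with h | h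
        · exact Or.inl (hs h)
        · exact Or.inr (Or.inl h)
      · rcases (hLG _).1 h2 i j hij (Or.inr hj) with h | h
        · exact Or.inl h
        · exact Or.inr (Or.inr h)
    have h4 := hmemδ α' (δ α ∪ δ α') (Set.union_subset (hδF α) (hδF α')) h3
    exact (Set.union_subset_iff.1 h4).1
  have hleft : ∀ α ∈ LGc, φ α ∩ Fᶜ = α := by
    intro α hα
    obtain ⟨hαc, -⟩ := (hLGc α).1 hα
    ext x
    constructor
    · rintro ⟨hx1 | hx1, hx2⟩
      · exact hx1
      · exact absurd (hδF α hx1) hx2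
    · intro hx
      exact ⟨Or.inl hx, hαc hx⟩
  have hmapsto : ∀ α ∈ LGc, φ α ∈ S := by
    intro α hα
    refine ⟨hδLG α hα, ?_⟩
    intro A hAF hAne hup
    obtain ⟨hmem, hss, -⟩ := hup
    have h1 : α ∪ (δ α ∪ A) ∈ LG := by
      rw [← Set.union_assoc]
      exact hmem
    have h2 : δ α ∪ A ⊆ δ α := hmemδ α _ (Set.union_subset (hδF α) hAF) h1
    have hAδ : A ⊆ φ α := fun x hx => Or.inr (h2 (Or.inr hx))
    exact hss.not_subset (Set.union_subset subset_rfl hAδ)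
  have hsurj : ∀ β ∈ S, ∃ α ∈ LGc, φ α = β := by
    intro β hβ
    obtain ⟨hβLG, hβS⟩ := hβ
    refine ⟨β ∩ Fᶜ, ?_, ?_⟩
    · rw [hLGc]
      exact ⟨Set.inter_subset_right, fun i hi j hj hij hj2 =>
        ⟨(hLG β).1 hβLG i j hij hj2.1, hi⟩⟩
    · have hsplit : (β ∩ Fᶜ) ∪ (β ∩ F) = β := by
        rw [Set.union_comm]
        exact Set.inter_union_compl β F
      have hαmem : β ∩ Fᶜ ∈ LGc := by
        rw [hLGc]
        exact ⟨Set.inter_subset_right, fun i hi j hj hij hj2 =>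
          ⟨(hLG β).1 hβLG i j hij hj2.1, hi⟩⟩
      have hβF : β ∩ F ⊆ δ (β ∩ Fᶜ) :=
        hmemδ _ _ Set.inter_subset_right (by rw [hsplit]; exact hβLG)
      have hβφ : β ⊆ φ (β ∩ Fᶜ) := by
        intro x hx
        by_cases hxF : x ∈ F
        · exact Or.inr (hβF ⟨hx, hxF⟩)
        · exact Or.inl ⟨hx, hxF⟩
      by_contra hne
      have hβss : β ⊂ φ (β ∩ Fᶜ) := Set.ssubset_iff_subset_ne.2 ⟨hβφ, fun h => hne h.symm⟩
      set T : Set (Set (Fin n)) := {γ | γ ∈ LG ∧ β ⊂ γ ∧ γ ⊆ φ (β ∩ Fᶜ)} with hTdef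
      have hTne : T.Nonempty := ⟨φ (β ∩ Fᶜ), hδLG _ hαmem, hβss, subset_rfl⟩
      obtain ⟨a, haT, hmin⟩ : ∃ a ∈ T, ∀ a' ∈ T, id a' ≤ id a → id a = id a' := by
        obtain ⟨a, ha⟩ := (Set.toFinite T).exists_minimal hTne
        exact ⟨a, ha.1, fun a' h1 h2 => le_antisymm (ha.2 h1 h2) h2⟩
      obtain ⟨haLG, haβ, haφ⟩ := haT
      have hup : IsUpperNeighbour n LG β a := by
        refine ⟨haLG, haβ, fun γ hγ hcon => ?_⟩
        have hγT : γ ∈ T := ⟨hγ, hcon.1, hcon.2.subset.trans haφ⟩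
        exact hcon.2.ne (hmin γ hγT hcon.2.subset).symm
      have hAF : a \ β ⊆ F := by
        intro x hx
        rcases haφ hx.1 with h | h
        · exact absurd h.1 hx.2
        · exact hδF _ h
      have hAne : (a \ β).Nonempty := by
        obtain ⟨x, hx1, hx2⟩ := Set.exists_of_ssubset haβ
        exact ⟨x, hx1, hx2⟩
      have := hβS (a \ β) hAF hAne
      rw [Set.union_diff_cancel haβ.subset] at this
      exact this hup
  refine ⟨⟨hmapsto, ?_, ?_⟩, ?_⟩
  · intro α hα α' hα' h
    rw [← hleft α hα, ← hleft α' hα']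
    exact congrArg (· ∩ Fᶜ) h
  · intro β hβ
    obtain ⟨α, hα, hφα⟩ := hsurj β hβ
    exact ⟨α, hα, hφα⟩
  · intro α hα α' hα'
    constructor
    · intro h
      exact Set.union_subset_union h (hδmono α hα α' hα' h)
    · intro h
      have := hleft α hα ▸ hleft α' hα' ▸ Set.inter_subset_inter_left Fᶜ h
      exact this

/-- Lemma 3.3: for `∅ ≠ F ⊊ [n]`, the map `φ(α) = α ∪ δ_α` is an order
isomorphism from `L_{G_F̄}` onto the set `S` of `β ∈ L_G` having no upper
neighbour of the form `β ∪ {p i : i ∈ A}` with `∅ ≠ A ⊆ F`. -/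
theorem stmt7 (n : ℕ) (E : Fin n → Fin n → Prop)
    (ha : ∀ i, E i i)
    (hb : ∀ i j k : Fin n, i ≠ j → j ≠ k → i ≠ k → E i j → E j k → E i k)
    (F : Set (Fin n)) (hF : F.Nonempty) (hFne : F ≠ Set.univ) :
    let LG := LGF n E Set.univ
    let LGc := LGF n E Fᶜ
    let δ : Set (Fin n) → Set (Fin n) :=
      fun α => ⋃₀ {γ | γ ⊆ F ∧ α ∪ γ ∈ LG}
    let S : Set (Set (Fin n)) :=
      {β ∈ LG | ∀ A ⊆ F, A.Nonempty → ¬ IsUpperNeighbour n LG β (β ∪ A)}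
    let φ : Set (Fin n) → Set (Fin n) := fun α => α ∪ δ α
    Set.BijOn φ LGc S ∧ ∀ α ∈ LGc, ∀ α' ∈ LGc, (α ⊆ α' ↔ φ α ⊆ φ α') := by
  intro LG LGc δ S φ
  exact aux_main n E ha hb F
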